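/- Any n-qubit uniformly controlled gate V_n = diag(U_1, ..., U_{2^{n-1}}) with each U_i ∈ U(2) can be decomposed as V_n = Λ'''·(I_{2^{n-1}} ⊗ SH)·Λ''·(I_{2^{n-1}} ⊗ HS†)·Λ', where Λ', Λ'', Λ''' are 2^n × 2^n diagonal unitary matrices, S = diag(1, i), and H is the Hadamard matrix. -/

import Mathlib

open Matrix Kronecker

/-- The phase gate `S = diag(1, i)`. -/
noncomputable def gateS : Matrix (Fin 2) (Fin 2) ℂ := !![1, 0; 0, Complex.I]

/-- The Hadamard gate `H = (1/√2)[[1,1],[1,-1]]`. -/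
noncomputable def gateH : Matrix (Fin 2) (Fin 2) ℂ :=
  ((1 / Real.sqrt 2 : ℝ) : ℂ) • !![1, 1; 1, -1]


local notation "K" => starRingEnd ℂ

lemma scalar_decomp (u v w z : ℂ)
    (h00 : u * K u + v * K v = 1) (h11 : w * K w + z * K z = 1)
    (h01 : u * K w + v * K z = 0) (g00 : K u * u + K w * w = 1) :
    ∃ a1 b1 a2 b2 a3 b3 : ℂ, ‖a1‖ = 1 ∧ ‖b1‖ = 1 ∧ ‖a2‖ = 1 ∧ ‖b2‖ = 1 ∧ ‖a3‖ = 1 ∧ ‖b3‖ = 1 ∧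
      u = a3 * ((a2 + b2) / 2) * a1 ∧
      v = a3 * (Complex.I * (b2 - a2) / 2) * b1 ∧
      w = b3 * (Complex.I * (a2 - b2) / 2) * a1 ∧
      z = b3 * ((a2 + b2) / 2) * b1 := by
  set cr : ℝ := ‖u‖ with hcr'
  set sr : ℝ := ‖v‖ with hsr'
  have hcrnn : 0 ≤ cr := norm_nonneg u
  have hsrnn : 0 ≤ sr := norm_nonneg v
  have hu : u * K u = (cr : ℂ)^2 := by
    rw [Complex.mul_conj, ← Complex.sq_norm]; push_cast; ring
  have hv : v * K v = (sr : ℂ)^2 := by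
    rw [Complex.mul_conj, ← Complex.sq_norm]; push_cast; ring
  have hcs : (cr : ℂ)^2 + (sr : ℂ)^2 = 1 := by rw [← hu, ← hv]; exact h00
  have hw2 : w * K w = (sr : ℂ)^2 := by linear_combination g00 - hu - hcs
  have hz2 : z * K z = (cr : ℂ)^2 := by linear_combination h11 - hw2 - hcs
  have hcsR : cr^2 + sr^2 = 1 := by exact_mod_cast hcs
  rcases eq_or_ne cr 0 with hc | hc
  · -- cr = 0
    have hsr1 : sr = 1 := by nlinarith
    have hu0 : u = 0 := by
      have : ‖u‖ = 0 := by rw [← hcr']; exact hc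
      exact norm_eq_zero.mp this
    have hz0 : z = 0 := by
      have h0 : z * K z = 0 := by rw [hz2, hc]; norm_num
      rw [Complex.mul_conj] at h0
      exact Complex.normSq_eq_zero.mp (by exact_mod_cast h0)
    have hwa : ‖w‖ = 1 := by
      have hnw : Complex.normSq w = sr^2 := by
        have := hw2; rw [Complex.mul_conj] at this; exact_mod_cast this
      nlinarith [Complex.sq_norm w, norm_nonneg w]
    refine ⟨1, 1, Complex.I, -Complex.I, v, -w, by simp, by simp, by simp, by simp, ?_, ?_,
      ?_, ?_, ?_, ?_⟩
    · rw [← hsr', hsr1]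
    · rw [norm_neg, hwa]
    · rw [hu0]; ring
    · rw [show Complex.I * (-Complex.I - Complex.I) / 2 = 1 by
        field_simp; linear_combination (-2) * Complex.I_sq]; ring
    · rw [show Complex.I * (Complex.I - -Complex.I) / 2 = -1 by
        field_simp; linear_combination 2 * Complex.I_sq]; ring
    · rw [hz0]; ring
  · rcases eq_or_ne sr 0 with hs | hs
    · -- sr = 0
      have hcr1 : cr = 1 := by nlinarith
      have hv0 : v = 0 := by
        have : ‖v‖ = 0 := by rw [← hsr']; exact hs
        exact norm_eq_zero.mp this
      have hw0 : w = 0 := by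
        have h0 : w * K w = 0 := by rw [hw2, hs]; norm_num
        rw [Complex.mul_conj] at h0
        exact Complex.normSq_eq_zero.mp (by exact_mod_cast h0)
      have hua : ‖u‖ = 1 := by rw [← hcr']; exact hcr1
      have hza : ‖z‖ = 1 := by
        have hnz : Complex.normSq z = cr^2 := by
          have := hz2; rw [Complex.mul_conj] at this; exact_mod_cast this
        nlinarith [Complex.sq_norm z, norm_nonneg z]
      have hu1 : u * K u = 1 := by rw [hu, hcr1]; norm_num
      refine ⟨1, K u * z, 1, 1, u, u, by simp, ?_, by simp, by simp, ?_, ?_, ?_, ?_, ?_, ?_⟩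
      · simp [hua, hza]
      · rw [hua]
      · rw [hua]
      · ring
      · rw [hv0]; ring
      · rw [hw0]; ring
      · field_simp
        linear_combination (-2 * z) * hu1
    · -- generic case
      have hcC : (cr : ℂ) ≠ 0 := by exact_mod_cast hc
      have hsC : (sr : ℂ) ≠ 0 := by exact_mod_cast hs
      have h7 : u * z * (sr : ℂ)^2 + v * w * (cr : ℂ)^2 = 0 := by
        linear_combination (-(u * z)) * hw2 + (-(v * w)) * hz2 + (w * z) * h01
      have h8 : (cr : ℂ)^2 * (z * (sr : ℂ)^2 + v * w * K u) = 0 := by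
        linear_combination (K u) * h7 + (-(z * (sr : ℂ)^2)) * hu
      have h9 : z * (sr : ℂ)^2 + v * w * K u = 0 := by
        rcases mul_eq_zero.mp h8 with h | h
        · exact absurd h (pow_ne_zero 2 hcC)
        · exact h
      have hwa : ‖w‖ = sr := by
        have hnw : Complex.normSq w = sr^2 := by
          have := hw2; rw [Complex.mul_conj] at this; exact_mod_cast this
        nlinarith [Complex.sq_norm w, norm_nonneg w]
      refine ⟨1, K u * v / (cr * sr), (cr : ℂ) + sr * Complex.I, (cr : ℂ) - sr * Complex.I,
        u / cr, -w / sr, by simp, ?_, ?_, ?_, ?_, ?_, ?_, ?_, ?_, ?_⟩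
      · have habs : ‖K u * v‖ = cr * sr := by
          rw [norm_mul, Complex.norm_conj, ← hcr', ← hsr']
        rw [norm_div, habs, norm_mul,
          Complex.norm_real, Real.norm_eq_abs, Complex.norm_real, Real.norm_eq_abs, abs_of_nonneg hcrnn, abs_of_nonneg hsrnn,
          div_self (mul_ne_zero hc hs)]
      · rw [Complex.norm_add_mul_I, hcsR, Real.sqrt_one]
      · have hrw : (cr : ℂ) - sr * Complex.I = (cr : ℂ) + ((-sr : ℝ) : ℂ) * Complex.I := by
          push_cast; ring
        rw [hrw, Complex.norm_add_mul_I,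
          show cr ^ 2 + (-sr) ^ 2 = 1 by rw [neg_sq]; exact hcsR, Real.sqrt_one]
      · rw [norm_div, ← hcr', Complex.norm_real, Real.norm_eq_abs,
          abs_of_nonneg hcrnn, div_self hc]
      · rw [norm_div, norm_neg, hwa,
          Complex.norm_real, Real.norm_eq_abs, abs_of_nonneg hsrnn, div_self hs]
      · field_simp
        ring
      · field_simp
        linear_combination (2 * (sr : ℂ) * u * (K u) * v) * Complex.I_sq + (-2 * (sr : ℂ) * v) * hu
      · field_simp
        linear_combination (2 * (sr : ℂ) * w) * Complex.I_sq
      · field_simp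
        linear_combination (2 * (cr : ℂ)) * h9

lemma hA_eq : gateS * gateH = ((1 / Real.sqrt 2 : ℝ) : ℂ) • !![1, 1; Complex.I, -Complex.I] := by
  rw [gateS, gateH, Matrix.mul_smul]
  congr 1
  norm_num [Matrix.mul_fin_two]

lemma hB_eq : gateH * gateSᴴ = ((1 / Real.sqrt 2 : ℝ) : ℂ) • !![1, -Complex.I; 1, Complex.I] := by
  rw [gateS, gateH, Matrix.smul_mul]
  congr 1
  ext i j
  fin_cases i <;> fin_cases j <;>
    simp [Matrix.mul_apply, Fin.sum_univ_two, Matrix.conjTranspose_apply]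

lemma entry_lemma {N : ℕ} (f₁ f₂ f₃ : Fin N × Fin 2 → ℂ) (A B : Matrix (Fin 2) (Fin 2) ℂ)
    (p q : Fin N × Fin 2) :
    (Matrix.diagonal f₃ * ((1 : Matrix (Fin N) (Fin N) ℂ) ⊗ₖ A) * Matrix.diagonal f₂ *
      ((1 : Matrix (Fin N) (Fin N) ℂ) ⊗ₖ B) * Matrix.diagonal f₁) p q =
    if p.1 = q.1 then f₃ p * (∑ k, A p.2 k * f₂ (p.1, k) * B k q.2) * f₁ q else 0 := by
  obtain ⟨p1, p2⟩ := p
  obtain ⟨q1, q2⟩ := q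
  simp [Matrix.mul_apply, Matrix.diagonal_apply, Fintype.sum_prod_type, Matrix.one_apply,
    Finset.mul_sum, Finset.sum_mul, ite_and, mul_ite, ite_mul, Finset.sum_ite_eq,
    Finset.sum_ite_eq']
  split_ifs with h
  · subst h; ring
  · rfl

lemma key (U : Matrix (Fin 2) (Fin 2) ℂ) (hU : U ∈ Matrix.unitaryGroup (Fin 2) ℂ) :
    ∃ a1 b1 a2 b2 a3 b3 : ℂ, ‖a1‖ = 1 ∧ ‖b1‖ = 1 ∧ ‖a2‖ = 1 ∧ ‖b2‖ = 1 ∧ ‖a3‖ = 1 ∧ ‖b3‖ = 1 ∧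
      ∀ i j : Fin 2, U i j =
        (![a3, b3] i) * (∑ k, (gateS * gateH) i k * (![a2, b2] k) * ((gateH * gateSᴴ) k j)) *
          (![a1, b1] j) := by
  have hr : ((Real.sqrt 2 : ℝ) : ℂ)⁻¹ * ((Real.sqrt 2 : ℝ) : ℂ)⁻¹ = 1 / 2 := by
    rw [← mul_inv, ← Complex.ofReal_mul, Real.mul_self_sqrt (by norm_num : (0:ℝ) ≤ 2)]
    norm_num
  have hU1 : U * star U = 1 := (Matrix.mem_unitaryGroup_iff).mp hU
  have hU2 : star U * U = 1 := (Matrix.mem_unitaryGroup_iff').mp hU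
  have h00 : U 0 0 * K (U 0 0) + U 0 1 * K (U 0 1) = 1 := by
    have := congrFun (congrFun hU1 0) 0
    simpa [Matrix.mul_apply, Fin.sum_univ_two, Matrix.one_apply, Matrix.conjTranspose_apply]
      using this
  have h11 : U 1 0 * K (U 1 0) + U 1 1 * K (U 1 1) = 1 := by
    have := congrFun (congrFun hU1 1) 1
    simpa [Matrix.mul_apply, Fin.sum_univ_two, Matrix.one_apply, Matrix.conjTranspose_apply]
      using this
  have h01 : U 0 0 * K (U 1 0) + U 0 1 * K (U 1 1) = 0 := by
    have := congrFun (congrFun hU1 0) 1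
    simpa [Matrix.mul_apply, Fin.sum_univ_two, Matrix.one_apply, Matrix.conjTranspose_apply]
      using this
  have g00 : K (U 0 0) * U 0 0 + K (U 1 0) * U 1 0 = 1 := by
    have := congrFun (congrFun hU2 0) 0
    simpa [Matrix.mul_apply, Fin.sum_univ_two, Matrix.one_apply, Matrix.conjTranspose_apply]
      using this
  obtain ⟨a1, b1, a2, b2, a3, b3, n1, n2, n3, n4, n5, n6, e1, e2, e3, e4⟩ :=
    scalar_decomp (U 0 0) (U 0 1) (U 1 0) (U 1 1) h00 h11 h01 g00
  refine ⟨a1, b1, a2, b2, a3, b3, n1, n2, n3, n4, n5, n6, ?_⟩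
  intro i j
  fin_cases i <;> fin_cases j <;>
    simp [hA_eq, hB_eq, Fin.sum_univ_two, Matrix.smul_apply]
  · linear_combination e1 + (-(a3 * a1 * (a2 + b2))) * hr
  · linear_combination e2 + (-(a3 * Complex.I * (b2 - a2) * b1)) * hr
  · linear_combination e3 + (-(b3 * Complex.I * (a2 - b2) * a1)) * hr
  · linear_combination e4 +
      (((Real.sqrt 2 : ℝ) : ℂ)⁻¹ * ((Real.sqrt 2 : ℝ) : ℂ)⁻¹ * (b3 * (a2 + b2) * b1)) *
        Complex.I_sq + (-(b3 * (a2 + b2) * b1)) * hr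
/-- Any `n`-qubit uniformly controlled gate `V_n = diag(U_1, …, U_{2^{n-1}})` with each
`U_i ∈ U(2)` decomposes as `V_n = Λ''' · (I ⊗ SH) · Λ'' · (I ⊗ HS†) · Λ'` with
`Λ', Λ'', Λ'''` diagonal unitary `2^n × 2^n` matrices. -/
theorem stmt15 (n : ℕ) (hn : 1 ≤ n)
    (U : Fin (2 ^ (n - 1)) → Matrix (Fin 2) (Fin 2) ℂ)
    (hU : ∀ i, U i ∈ Matrix.unitaryGroup (Fin 2) ℂ) :
    ∃ f₁ f₂ f₃ : Fin (2 ^ (n - 1)) × Fin 2 → ℂ,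
      (∀ z, ‖f₁ z‖ = 1) ∧ (∀ z, ‖f₂ z‖ = 1) ∧ (∀ z, ‖f₃ z‖ = 1) ∧
      (Matrix.of fun p q : Fin (2 ^ (n - 1)) × Fin 2 =>
          if p.1 = q.1 then U p.1 p.2 q.2 else 0) =
        Matrix.diagonal f₃ *
          ((1 : Matrix (Fin (2 ^ (n - 1))) (Fin (2 ^ (n - 1))) ℂ) ⊗ₖ (gateS * gateH)) *
          Matrix.diagonal f₂ *
          ((1 : Matrix (Fin (2 ^ (n - 1))) (Fin (2 ^ (n - 1))) ℂ) ⊗ₖ (gateH * gateSᴴ)) *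
          Matrix.diagonal f₁ := by
  choose a1 b1 a2 b2 a3 b3 n1 n2 n3 n4 n5 n6 heq using fun i => key (U i) (hU i)
  refine ⟨fun z => ![a1 z.1, b1 z.1] z.2, fun z => ![a2 z.1, b2 z.1] z.2,
    fun z => ![a3 z.1, b3 z.1] z.2, ?_, ?_, ?_, ?_⟩
  · rintro ⟨i, k⟩; fin_cases k <;> simp [n1, n2]
  · rintro ⟨i, k⟩; fin_cases k <;> simp [n3, n4]
  · rintro ⟨i, k⟩; fin_cases k <;> simp [n5, n6]
  · ext ⟨p1, p2⟩ ⟨q1, q2⟩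
    rw [entry_lemma]
    simp only [Matrix.of_apply]
    split_ifs with h
    · subst h
      exact heq p1 p2 q2
    · rfl
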